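/- If D is an orientation of a complete graph (a tournament) on n vertices whose Hermitian adjacency matrix H_{π/3}(D) has symmetric spectrum, then Σᵢ C(dᵢ⁺, 2) = (2/3)·C(n,3), where dᵢ⁺ is the out-degree of vertex i. -/

import Mathlib

open Matrix

section Aux

variable {X M : Type*} [Fintype X] [AddCommMonoid M]

lemma sum3_s12 (f : X → X → X → M) :
    ∑ u, ∑ v, ∑ w, f u v w = ∑ u, ∑ v, ∑ w, f v u w := Finset.sum_comm

lemma sum3_s23 (f : X → X → X → M) :
    ∑ u, ∑ v, ∑ w, f u v w = ∑ u, ∑ v, ∑ w, f u w v :=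
  Finset.sum_congr rfl fun _ _ => Finset.sum_comm

lemma sum3_s13 (f : X → X → X → M) :
    ∑ u, ∑ v, ∑ w, f u v w = ∑ u, ∑ v, ∑ w, f w v u :=
  (sum3_s12 f).trans ((sum3_s23 _).trans (sum3_s12 _))

lemma sum3_rot (f : X → X → X → M) :
    ∑ u, ∑ v, ∑ w, f u v w = ∑ u, ∑ v, ∑ w, f v w u :=
  (sum3_s13 f).trans (sum3_s23 _)

lemma sum3_rot2 (f : X → X → X → M) :
    ∑ u, ∑ v, ∑ w, f u v w = ∑ u, ∑ v, ∑ w, f w u v :=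
  (sum3_rot f).trans (sum3_rot _)

lemma sum3_congr (f g : X → X → X → M) (h : ∀ u v w, f u v w = g u v w) :
    ∑ u, ∑ v, ∑ w, f u v w = ∑ u, ∑ v, ∑ w, g u v w := by
  simp only [h]

lemma trace_cube {m : Type*} [Fintype m] [DecidableEq m] (A : Matrix m m ℂ)
    (hA : A.IsHermitian) : (A * A * A).trace = ∑ i, (hA.eigenvalues i : ℂ)^3 := by
  conv_lhs => rw [hA.spectral_theorem, Unitary.conjStarAlgAut_apply]
  set U := (hA.eigenvectorUnitary : Matrix m m ℂ)
  set D := diagonal (RCLike.ofReal ∘ hA.eigenvalues : m → ℂ)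
  have hU : star U * U = 1 := Unitary.coe_star_mul_self hA.eigenvectorUnitary
  have key : ∀ X : Matrix m m ℂ, star U * (U * X) = X := by
    intro X; rw [← mul_assoc, hU, one_mul]
  have : (U * D * star U) * (U * D * star U) * (U * D * star U)
      = U * (D * (D * D)) * star U := by
    simp only [mul_assoc, key]
  rw [this, Matrix.trace_mul_cycle, ← mul_assoc, hU, one_mul]
  simp [D, diagonal_mul_diagonal, trace_diagonal, Function.comp]
  ring_nf

end Aux

/-- If a tournament on `n` vertices has `H_{π/3}` with symmetric spectrum, then
`∑ i, C(d⁺ i, 2) = (2/3) * C(n, 3)` where `d⁺ i` is the out-degree of `i`. -/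
theorem stmt_7 (n : ℕ) (arc : Fin n → Fin n → Prop) [DecidableRel arc]
    (hasym : ∀ u v, arc u v → ¬ arc v u)
    (htour : ∀ u v, u ≠ v → arc u v ∨ arc v u)
    (H : Matrix (Fin n) (Fin n) ℂ)
    (hH : ∀ u v, H u v =
      if arc u v then Complex.exp ((Real.pi / 3 : ℝ) * Complex.I)
      else if arc v u then Complex.exp (-((Real.pi / 3 : ℝ) * Complex.I)) else 0)
    (hHerm : H.IsHermitian)
    (hsym : ∃ σ : Equiv.Perm (Fin n), ∀ i, hHerm.eigenvalues (σ i) = - hHerm.eigenvalues i) :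
    (∑ i : Fin n, ((Finset.univ.filter (fun j => arc i j)).card.choose 2 : ℚ))
      = (2 / 3 : ℚ) * (n.choose 3 : ℚ) := by
  classical
  -- the value of ω = e^{iπ/3}
  set ω : ℂ := Complex.exp ((Real.pi / 3 : ℝ) * Complex.I) with hωdef
  have hω : ω = 1/2 + ((Real.sqrt 3 : ℝ) : ℂ)/2 * Complex.I := by
    rw [hωdef, Complex.exp_mul_I, ← Complex.ofReal_cos, ← Complex.ofReal_sin,
      Real.cos_pi_div_three, Real.sin_pi_div_three]
    push_cast; ring
  have hs3 : ((Real.sqrt 3 : ℝ) : ℂ)^2 = 3 := by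
    norm_cast
    rw [Real.sq_sqrt] <;> norm_num
  have hω2 : ω^2 = ω - 1 := by
    rw [hω]; linear_combination (Complex.I^2/4) * hs3 + (3/4 : ℂ) * Complex.I_sq
  have hconj : Complex.exp (-(((Real.pi / 3 : ℝ) : ℂ) * Complex.I)) = 1 - ω := by
    have h1 : -(((Real.pi / 3 : ℝ) : ℂ) * Complex.I)
        = ((-(Real.pi / 3) : ℝ) : ℂ) * Complex.I := by push_cast; ring
    rw [h1, Complex.exp_mul_I, ← Complex.ofReal_cos, ← Complex.ofReal_sin,
      Real.cos_neg, Real.sin_neg, Real.cos_pi_div_three, Real.sin_pi_div_three, hω]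
    push_cast; ring
  have harcne : ∀ u, ¬ arc u u := fun u h => hasym u u h h
  set A : Fin n → Fin n → ℂ := fun u v => if arc u v then 1 else 0 with hAdef
  have hA2 : ∀ u v, A u v * A u v = A u v := by
    intro u v; simp only [hAdef]; split <;> ring
  have hA0 : ∀ u, A u u = 0 := by intro u; simp [hAdef, harcne u]
  have haa : ∀ u v, A u v + A v u = if u = v then 0 else 1 := by
    intro u v
    by_cases h : u = v
    · subst h; simp [hA0]
    · rcases htour u v h with h1 | h1
      · simp [hAdef, h, h1, hasym u v h1]
      · simp [hAdef, h, h1, hasym v u h1]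
  have hA' : ∀ u v, H u v = ω * A u v + (1 - ω) * A v u := by
    intro u v
    by_cases h1 : arc u v
    · simp [hH u v, hAdef, h1, hasym u v h1]
    · by_cases h2 : arc v u
      · rw [hH u v, if_neg h1, if_pos h2, hconj]
        simp [hAdef, h1, h2]
      · have huv : u = v := by
          by_contra h
          rcases htour u v h with h' | h'
          · exact h1 h'
          · exact h2 h'
        subst huv; simp [hH u u, hAdef, h1]
  -- the two fundamental triple sums
  set T : ℂ := ∑ u : Fin n, ∑ v : Fin n, ∑ w : Fin n, A u v * A u w * A v w with hT
  set C3 : ℂ := ∑ u : Fin n, ∑ v : Fin n, ∑ w : Fin n, A u v * A v w * A w u with hC3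
  -- the six transitive monomial sums all equal T
  have e1 : ∑ u : Fin n, ∑ v : Fin n, ∑ w : Fin n, A u v * A v w * A u w = T := by
    rw [hT]; exact sum3_congr _ _ (fun u v w => by ring)
  have e2 : ∑ u : Fin n, ∑ v : Fin n, ∑ w : Fin n, A u v * A w v * A w u = T := by
    rw [hT]
    refine ((sum3_rot2 (fun a b c => A a b * A a c * A b c)).trans ?_).symm
    exact sum3_congr _ _ (fun u v w => by
      show A w u * A w v * A u v = A u v * A w v * A w u; ring)
  have e3 : ∑ u : Fin n, ∑ v : Fin n, ∑ w : Fin n, A v u * A v w * A w u = T := by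
    rw [hT]
    refine ((sum3_rot (fun a b c => A a b * A a c * A b c)).trans ?_).symm
    exact sum3_congr _ _ (fun u v w => by
      show A v w * A v u * A w u = A v u * A v w * A w u; ring)
  have e4 : ∑ u : Fin n, ∑ v : Fin n, ∑ w : Fin n, A u v * A w v * A u w = T := by
    rw [hT]
    refine ((sum3_s23 (fun a b c => A a b * A a c * A b c)).trans ?_).symm
    exact sum3_congr _ _ (fun u v w => by
      show A u w * A u v * A w v = A u v * A w v * A u w; ring)
  have e5 : ∑ u : Fin n, ∑ v : Fin n, ∑ w : Fin n, A v u * A v w * A u w = T := by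
    rw [hT]
    refine ((sum3_s12 (fun a b c => A a b * A a c * A b c)).trans ?_).symm
    exact sum3_congr _ _ (fun u v w => by
      show A v u * A v w * A u w = A v u * A v w * A u w; ring)
  have e6 : ∑ u : Fin n, ∑ v : Fin n, ∑ w : Fin n, A v u * A w v * A w u = T := by
    rw [hT]
    refine ((sum3_s13 (fun a b c => A a b * A a c * A b c)).trans ?_).symm
    exact sum3_congr _ _ (fun u v w => by
      show A w v * A w u * A v u = A v u * A w v * A w u; ring)
  have e7 : ∑ u : Fin n, ∑ v : Fin n, ∑ w : Fin n, A v u * A w v * A u w = C3 := by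
    rw [hC3]
    refine ((sum3_s23 (fun a b c => A a b * A b c * A c a)).trans ?_).symm
    exact sum3_congr _ _ (fun u v w => by
      show A u w * A w v * A v u = A v u * A w v * A u w; ring)
  -- coefficient identities
  have c1 : ω^3 = -1 := by linear_combination (ω + 1) * hω2
  have c2 : (1-ω)^3 = -1 := by linear_combination (2 - ω) * hω2
  have c3 : ω^2*(1-ω) = ω := by linear_combination (-ω) * hω2
  have c4 : ω*(1-ω)^2 = 1-ω := by linear_combination (ω - 1) * hω2
  -- expansion of the closed-walk sum
  have hS : ∑ u : Fin n, ∑ v : Fin n, ∑ w : Fin n, H u v * H v w * H w u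
      = 3 * T - 2 * C3 := by
    have hexp : ∀ u v w : Fin n, H u v * H v w * H w u =
        ω^3 * (A u v * A v w * A w u) + (1-ω)^3 * (A v u * A w v * A u w)
        + ω^2*(1-ω) * (A u v * A v w * A u w) + ω^2*(1-ω) * (A u v * A w v * A w u)
        + ω^2*(1-ω) * (A v u * A v w * A w u)
        + ω*(1-ω)^2 * (A u v * A w v * A u w) + ω*(1-ω)^2 * (A v u * A v w * A u w)
        + ω*(1-ω)^2 * (A v u * A w v * A w u) := by
      intro u v w; rw [hA' u v, hA' v w, hA' w u]; ring
    calc ∑ u : Fin n, ∑ v : Fin n, ∑ w : Fin n, H u v * H v w * H w u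
        = ∑ u : Fin n, ∑ v : Fin n, ∑ w : Fin n,
          (ω^3 * (A u v * A v w * A w u) + (1-ω)^3 * (A v u * A w v * A u w)
          + ω^2*(1-ω) * (A u v * A v w * A u w) + ω^2*(1-ω) * (A u v * A w v * A w u)
          + ω^2*(1-ω) * (A v u * A v w * A w u)
          + ω*(1-ω)^2 * (A u v * A w v * A u w) + ω*(1-ω)^2 * (A v u * A v w * A u w)
          + ω*(1-ω)^2 * (A v u * A w v * A w u)) := sum3_congr _ _ hexp
      _ = ω^3 * C3 + (1-ω)^3 * C3 + ω^2*(1-ω) * T + ω^2*(1-ω) * T + ω^2*(1-ω) * T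
          + ω*(1-ω)^2 * T + ω*(1-ω)^2 * T + ω*(1-ω)^2 * T := by
          simp only [Finset.sum_add_distrib, ← Finset.mul_sum]
          rw [← hC3, e1, e2, e3, e4, e5, e6, e7]
      _ = 3 * T - 2 * C3 := by rw [c1, c2, c3, c4]; ring
  -- the all-ones expansion
  have hPT : ∑ u : Fin n, ∑ v : Fin n, ∑ w : Fin n,
      (A u v + A v u) * ((A v w + A w v) * (A w u + A u w)) = 6 * T + 2 * C3 := by
    calc ∑ u : Fin n, ∑ v : Fin n, ∑ w : Fin n,
        (A u v + A v u) * ((A v w + A w v) * (A w u + A u w))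
        = ∑ u : Fin n, ∑ v : Fin n, ∑ w : Fin n,
          ((A u v * A v w * A w u) + (A v u * A w v * A u w)
          + (A u v * A v w * A u w) + (A u v * A w v * A w u)
          + (A v u * A v w * A w u)
          + (A u v * A w v * A u w) + (A v u * A v w * A u w)
          + (A v u * A w v * A w u)) := sum3_congr _ _ (fun u v w => by ring)
      _ = C3 + C3 + T + T + T + T + T + T := by
          simp only [Finset.sum_add_distrib]
          rw [← hC3, e1, e2, e3, e4, e5, e6, e7]
      _ = 6 * T + 2 * C3 := by ring
  -- evaluating the all-ones sum
  have hPval : ∑ u : Fin n, ∑ v : Fin n, ∑ w : Fin n,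
      (A u v + A v u) * ((A v w + A w v) * (A w u + A u w))
      = (n:ℂ) * ((n:ℂ) - 1) * ((n:ℂ) - 2) := by
    have inner1 : ∀ v u : Fin n, ∑ w : Fin n, (A v w + A w v) * (A w u + A u w)
        = (n:ℂ) - 2 + (if v = u then 1 else 0) := by
      intro v u
      have hpt : ∀ w, (A v w + A w v) * (A w u + A u w)
          = 1 - (if v = w then (1:ℂ) else 0) - (if w = u then 1 else 0)
            + (if v = w then (1:ℂ) else 0) * (if w = u then 1 else 0) := by
        intro w
        rw [haa v w, haa w u]
        by_cases h1 : v = w <;> by_cases h2 : w = u <;> simp [h1, h2]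
      simp only [hpt]
      simp [Finset.sum_add_distrib, Finset.sum_sub_distrib, Finset.sum_ite_eq,
        Finset.card_univ, mul_ite, mul_one, mul_zero]
      ring
    have inner2 : ∀ u : Fin n, ∑ v : Fin n,
        (A u v + A v u) * ((n:ℂ) - 2 + (if v = u then 1 else 0))
        = ((n:ℂ) - 1) * ((n:ℂ) - 2) := by
      intro u
      have hpt : ∀ v, (A u v + A v u) * ((n:ℂ) - 2 + (if v = u then 1 else 0))
          = (1 - (if u = v then (1:ℂ) else 0)) * ((n:ℂ) - 2)
            + (if v = u then (A u v + A v u) else 0) := by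
        intro v
        rw [haa u v]
        by_cases h1 : v = u
        · subst h1; simp [hA0]
        · have h2 : ¬ u = v := fun h => h1 h.symm
          simp [h1, h2]
      simp only [hpt]
      rw [Finset.sum_add_distrib]
      have hs1 : ∑ v : Fin n, (if v = u then A u v + A v u else 0) = 0 := by
        simp [Finset.sum_ite_eq', hA0]
      have hs2 : ∑ v : Fin n, (1 - (if u = v then (1:ℂ) else 0)) * ((n:ℂ) - 2)
          = ((n:ℂ) - 1) * ((n:ℂ) - 2) := by
        rw [← Finset.sum_mul]
        have hcount : ∑ v : Fin n, (1 - (if u = v then (1:ℂ) else 0)) = (n:ℂ) - 1 := by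
          rw [Finset.sum_sub_distrib]
          simp [Finset.sum_ite_eq, Finset.card_univ]
        rw [hcount]
      rw [hs1, hs2, add_zero]
    calc ∑ u : Fin n, ∑ v : Fin n, ∑ w : Fin n,
        (A u v + A v u) * ((A v w + A w v) * (A w u + A u w))
        = ∑ u : Fin n, ∑ v : Fin n,
          (A u v + A v u) * ((n:ℂ) - 2 + (if v = u then 1 else 0)) := by
          apply Finset.sum_congr rfl; intro u _
          apply Finset.sum_congr rfl; intro v _
          rw [← Finset.mul_sum, inner1]
      _ = ∑ u : Fin n, ((n:ℂ) - 1) * ((n:ℂ) - 2) := by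
          apply Finset.sum_congr rfl; intro u _; exact inner2 u
      _ = (n:ℂ) * ((n:ℂ) - 1) * ((n:ℂ) - 2) := by
          rw [Finset.sum_const, Finset.card_univ, Fintype.card_fin]
          simp [nsmul_eq_mul]; ring
  -- trace as sum over closed walks
  have htr : (H * H * H).trace
      = ∑ u : Fin n, ∑ v : Fin n, ∑ w : Fin n, H u v * H v w * H w u := by
    simp only [Matrix.trace, Matrix.diag, Matrix.mul_apply, Finset.sum_mul]
    exact sum3_s23 (fun a b c => H a c * H c b * H b a)
  -- symmetric spectrum kills the trace of the cube
  have heig : ∑ i, (hHerm.eigenvalues i : ℂ)^3 = 0 := by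
    obtain ⟨σ, hσ⟩ := hsym
    have hreal : ∑ i, (hHerm.eigenvalues i)^3 = 0 := by
      have h1 : ∑ i, (hHerm.eigenvalues (σ i))^3 = ∑ i, (hHerm.eigenvalues i)^3 :=
        Equiv.sum_comp σ (fun i => (hHerm.eigenvalues i)^3)
      have h2 : ∑ i, (hHerm.eigenvalues (σ i))^3 = -∑ i, (hHerm.eigenvalues i)^3 := by
        simp only [hσ]
        rw [← Finset.sum_neg_distrib]
        apply Finset.sum_congr rfl; intro i _; ring
      rw [h1] at h2; linarith
    have := congrArg (fun x : ℝ => (x : ℂ)) hreal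
    push_cast at this
    simpa using this
  have hS0 : 3 * T - 2 * C3 = 0 := by
    have h := trace_cube H hHerm
    rw [htr, hS, heig] at h
    exact h
  have h9 : 9 * T = (n:ℂ) * ((n:ℂ) - 1) * ((n:ℂ) - 2) := by
    rw [hPval] at hPT
    linear_combination (-1 : ℂ) * hPT + hS0
  -- T is the (cast of the) natural number we are interested in
  set t : ℕ := ∑ i : Fin n, ((Finset.univ.filter (fun j => arc i j)).card.choose 2) with ht
  have hTt : T = (t : ℂ) := by
    rw [hT, ht]
    push_cast
    apply Finset.sum_congr rfl; intro u _
    set d : ℕ := (Finset.univ.filter (fun j => arc u j)).card with hd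
    have hsumA : ∑ v : Fin n, A u v = (d:ℂ) := by
      simp only [hAdef]
      rw [Finset.sum_boole, hd]
    have hswap : ∑ v : Fin n, ∑ w : Fin n, A u v * A u w * A v w
        = ∑ v : Fin n, ∑ w : Fin n, A u v * A u w * A w v := by
      rw [Finset.sum_comm]
      apply Finset.sum_congr rfl; intro v _
      apply Finset.sum_congr rfl; intro w _
      ring
    have hdouble : (∑ v : Fin n, ∑ w : Fin n, A u v * A u w * A v w) * 2
        = (d:ℂ)^2 - (d:ℂ) := by
      have hpt : ∀ v w : Fin n, A u v * A u w * A v w + A u v * A u w * A w v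
          = A u v * A u w - (if v = w then (1:ℂ) else 0) * (A u v * A u w) := by
        intro v w
        by_cases h : v = w
        · subst h; simp [hA0, hA2]
        · have h1 := haa v w; rw [if_neg h] at h1
          rw [if_neg h]
          linear_combination (A u v * A u w) * h1
      calc (∑ v : Fin n, ∑ w : Fin n, A u v * A u w * A v w) * 2
          = (∑ v : Fin n, ∑ w : Fin n, A u v * A u w * A v w)
            + ∑ v : Fin n, ∑ w : Fin n, A u v * A u w * A w v := by
            rw [hswap]; ring
        _ = ∑ v : Fin n, ∑ w : Fin n,
            (A u v * A u w * A v w + A u v * A u w * A w v) := by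
            simp only [← Finset.sum_add_distrib]
        _ = ∑ v : Fin n, ∑ w : Fin n,
            (A u v * A u w - (if v = w then (1:ℂ) else 0) * (A u v * A u w)) :=
            Finset.sum_congr rfl fun v _ => Finset.sum_congr rfl fun w _ => hpt v w
        _ = (d:ℂ) * (d:ℂ) - (d:ℂ) := by
            have hfirst : ∑ v : Fin n, ∑ w : Fin n, A u v * A u w = (d:ℂ) * (d:ℂ) := by
              rw [← Finset.sum_mul_sum Finset.univ Finset.univ
                (fun v => A u v) (fun w => A u w), hsumA]
            have hsecond : ∑ v : Fin n, ∑ w : Fin n,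
                (if v = w then (1:ℂ) else 0) * (A u v * A u w) = (d:ℂ) := by
              have hin : ∀ v : Fin n, ∑ w : Fin n,
                  (if v = w then (1:ℂ) else 0) * (A u v * A u w) = A u v := by
                intro v
                simp only [ite_mul, one_mul, zero_mul, Finset.sum_ite_eq, Finset.mem_univ,
                  if_true, hA2]
              simp only [hin]
              exact hsumA
            simp only [Finset.sum_sub_distrib]
            rw [hfirst, hsecond]
        _ = (d:ℂ)^2 - (d:ℂ) := by ring
    have hch : ((d.choose 2 : ℕ) : ℂ) = (d:ℂ) * ((d:ℂ) - 1) / 2 := Nat.cast_choose_two ℂ d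
    linear_combination hdouble / 2 - hch
  -- transfer to ℕ and then to ℚ
  have hch3 : 6 * n.choose 3 = n * ((n-1) * (n-2)) := by
    have h1 : n.descFactorial 3 = 6 * n.choose 3 := by
      rw [Nat.descFactorial_eq_factorial_mul_choose]; norm_num [Nat.factorial]
    rw [← h1]
    simp [Nat.descFactorial]
    ring
  have hcast : ((n * ((n-1) * (n-2)) : ℕ) : ℂ) = (n:ℂ) * ((n:ℂ) - 1) * ((n:ℂ) - 2) := by
    match n with
    | 0 => simp
    | 1 => norm_num
    | (m+2) =>
      simp only [Nat.add_sub_cancel]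
      push_cast
      ring
  have hnat : ((9 * t : ℕ) : ℂ) = ((6 * n.choose 3 : ℕ) : ℂ) := by
    have h6 : ((6 * n.choose 3 : ℕ) : ℂ) = (n:ℂ) * ((n:ℂ) - 1) * ((n:ℂ) - 2) := by
      rw [hch3]; exact hcast
    rw [h6]
    push_cast
    rw [← hTt]
    linear_combination h9
  have hnat' : 9 * t = 6 * n.choose 3 := Nat.cast_injective hnat
  have hq : (9:ℚ) * (t:ℚ) = 6 * (n.choose 3 : ℚ) := by exact_mod_cast hnat'
  have hgoal : (∑ i : Fin n, ((Finset.univ.filter (fun j => arc i j)).card.choose 2 : ℚ))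
      = (t:ℚ) := by
    rw [ht]; push_cast; rfl
  rw [hgoal]
  linarith
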